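/- Let G be a finite simple graph with positive integer vertex weights w, let c be a proper coloring of G, and let u and v be closed twins of G with w(v) ≥ w(u). Suppose that in c the singleton {v} is a color class and u belongs to a color class S (with u ∈ S, v ∉ S). Then the coloring obtained from c by replacing the color classes S and {v} with (S ∖ {u}) ∪ {v} and {u} is a proper coloring of G whose weight is at most the weight of c. -/

import Mathlib

open Finset

/-- A finset of vertices is independent (stable) in `G`. -/
def IndepSet {V : Type*} (G : SimpleGraph V) (S : Finset V) : Prop :=
  ∀ u ∈ S, ∀ v ∈ S, ¬ G.Adj u v

/-- A proper coloring of the subgraph of `G` induced by `A`: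
a partition of `A` into independent sets (the color classes). -/
def IsProperColoring {V : Type*} [DecidableEq V] (G : SimpleGraph V) {A : Finset V}
    (P : Finpartition A) : Prop :=
  ∀ S ∈ P.parts, IndepSet G S

/-- The weight of a coloring: the sum over color classes of the maximum weight in the class. -/
def colWeight {V : Type*} [DecidableEq V] {A : Finset V} (w : V → ℕ) (P : Finpartition A) : ℕ :=
  ∑ S ∈ P.parts, S.sup w

/-- The weighted chromatic number of the subgraph of `G` induced by the vertex set `A`. -/
noncomputable def sigmaOn {V : Type*} [DecidableEq V] (G : SimpleGraph V) (w : V → ℕ)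
    (A : Finset V) : ℕ :=
  sInf { n | ∃ P : Finpartition A, IsProperColoring G P ∧ n = colWeight w P }

/-- The weighted chromatic number `σ(G,w)`. -/
noncomputable def sigmaW {V : Type*} [Fintype V] [DecidableEq V] (G : SimpleGraph V)
    (w : V → ℕ) : ℕ :=
  sigmaOn G w Finset.univ

/-- An antimatching of `G`: a set of pairwise disjoint unordered pairs of distinct
non-adjacent vertices of `G` (equivalently, a matching of the complement of `G`). -/
def IsAntimatching {V : Type*} (G : SimpleGraph V) (M : Finset (Sym2 V)) : Prop :=
  (∀ e ∈ M, e ∈ Gᶜ.edgeSet) ∧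
  ∀ e ∈ M, ∀ f ∈ M, e ≠ f → ∀ x, x ∈ e → x ∉ f

/-- A maximum antimatching of `G`. -/
def IsMaxAntimatching {V : Type*} (G : SimpleGraph V) (M : Finset (Sym2 V)) : Prop :=
  IsAntimatching G M ∧ ∀ M' : Finset (Sym2 V), IsAntimatching G M' → M'.card ≤ M.card

/-- The set `V(M̄)` of vertices covered by the pairs of `M`. -/
def coveredVerts {V : Type*} [Fintype V] [DecidableEq V] (M : Finset (Sym2 V)) : Finset V :=
  Finset.univ.filter fun v => ∃ e ∈ M, v ∈ e

/-- `G` is an interval graph: vertices can be assigned nonempty closed real intervals so that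
two distinct vertices are adjacent iff their intervals intersect. -/
def IsIntervalGraph {V : Type*} (G : SimpleGraph V) : Prop :=
  ∃ f : V → ℝ × ℝ, (∀ v, (f v).1 ≤ (f v).2) ∧
    ∀ u v : V, G.Adj u v ↔
      u ≠ v ∧ (Set.Icc (f u).1 (f u).2 ∩ Set.Icc (f v).1 (f v).2).Nonempty

/-- swapping closed twins `u` (in class `S`) and `v` (a singleton class, with
`w v ≥ w u`) yields a proper coloring of weight at most the weight of `c`. -/
theorem swap_closed_twins_coloring
    {V : Type*} [Fintype V] [DecidableEq V] (G : SimpleGraph V) (w : V → ℕ)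
    (hw : ∀ x, 0 < w x)
    (c : Finpartition (Finset.univ : Finset V)) (hc : IsProperColoring G c)
    (u v : V)
    (htwin : ∀ x : V, (x = u ∨ G.Adj u x) ↔ (x = v ∨ G.Adj v x))
    (hwuv : w u ≤ w v)
    (S : Finset V) (hS : S ∈ c.parts) (huS : u ∈ S) (hvS : v ∉ S)
    (hvsing : {v} ∈ c.parts) :
    ∃ c' : Finpartition (Finset.univ : Finset V),
      c'.parts = insert {u} (insert ((S \ {u}) ∪ {v}) ((c.parts.erase S).erase {v})) ∧
      IsProperColoring G c' ∧ colWeight w c' ≤ colWeight w c := by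
  
  classical
  have huv : u ≠ v := fun h => hvS (h ▸ huS)
  have hSv : S ≠ {v} := fun h => huv (mem_singleton.1 (h ▸ huS))
  have hdisj : ∀ P ∈ c.parts, ∀ Q ∈ c.parts, P ≠ Q → Disjoint P Q := by
    intro P hP Q hQ hne
    exact c.disjoint hP hQ hne
  -- u appears only in S; v appears only in {v}
  have hu_only : ∀ P ∈ c.parts, P ≠ S → u ∉ P := by
    intro P hP hne hu
    exact hne (c.eq_of_mem_parts hP hS hu huS)
  have hv_only : ∀ P ∈ c.parts, P ≠ {v} → v ∉ P := by
    intro P hP hne hv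
    exact hne (c.eq_of_mem_parts hP hvsing hv (mem_singleton_self v))
  set S' : Finset V := (S \ {u}) ∪ {v} with hS'def
  set R : Finset (Finset V) := (c.parts.erase S).erase {v} with hRdef
  have hvS' : v ∈ S' := by simp [hS'def]
  have huS' : u ∉ S' := by simp [hS'def, huv]
  have hRmem : ∀ P ∈ R, P ∈ c.parts ∧ P ≠ S ∧ P ≠ {v} := by
    intro P hP
    simp only [hRdef, mem_erase] at hP
    exact ⟨hP.2.2, hP.2.1, hP.1⟩
  -- the new set of parts
  set T : Finset (Finset V) := insert {u} (insert S' R) with hTdef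
  have huT : ({u} : Finset V) ∉ insert S' R := by
    intro h
    rcases mem_insert.1 h with h | h
    · exact huS' (h ▸ mem_singleton_self u)
    · obtain ⟨hP, hPS, _⟩ := hRmem _ h
      exact hu_only _ hP hPS (mem_singleton_self u)
  have hS'R : S' ∉ R := by
    intro h
    obtain ⟨hP, _, hPv⟩ := hRmem _ h
    exact hv_only _ hP hPv hvS'
  have hsup : T.sup id = (Finset.univ : Finset V) := by
    apply Finset.Subset.antisymm (Finset.subset_univ _)
    intro x _
    obtain ⟨P, hP, hxP⟩ := c.exists_mem (mem_univ x)
    rw [Finset.mem_sup]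
    by_cases hPS : P = S
    · subst hPS
      by_cases hxu : x = u
      · exact ⟨{u}, mem_insert_self _ _, by simp [hxu]⟩
      · exact ⟨S', mem_insert_of_mem (mem_insert_self _ _),
          mem_union_left _ (mem_sdiff.2 ⟨hxP, by simp [hxu]⟩)⟩
    · by_cases hPv : P = {v}
      · subst hPv
        exact ⟨S', mem_insert_of_mem (mem_insert_self _ _),
          mem_union_right _ (by simpa using hxP)⟩
      · exact ⟨P, mem_insert_of_mem (mem_insert_of_mem
          (by simp [hRdef, mem_erase, hPv, hPS, hP])), hxP⟩
  have hSdisj : ∀ P ∈ R, Disjoint S' P := by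
    intro P hP
    obtain ⟨hPc, hPS, hPv⟩ := hRmem _ hP
    have h1 : Disjoint (S \ {u}) P :=
      (hdisj S hS P hPc (Ne.symm hPS)).mono_left sdiff_subset
    have h2 : Disjoint ({v} : Finset V) P := hdisj _ hvsing P hPc (Ne.symm hPv)
    exact Finset.disjoint_union_left.2 ⟨h1, h2⟩
  have hindep : T.SupIndep id := by
    rw [Finset.supIndep_iff_pairwiseDisjoint]
    intro P hP Q hQ hne
    simp only [hTdef, coe_insert, Set.mem_insert_iff, mem_coe] at hP hQ
    have key : ∀ A B : Finset V,
        (A = {u} ∨ A = S' ∨ A ∈ R) → (B = {u} ∨ B = S' ∨ B ∈ R) → A ≠ B →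
        Disjoint A B := by
      intro A B hA hB hAB
      rcases hA with rfl | rfl | hA
      · rcases hB with rfl | rfl | hB
        · exact absurd rfl hAB
        · exact Finset.disjoint_singleton_left.2 huS'
        · exact Finset.disjoint_singleton_left.2
            (hu_only _ (hRmem _ hB).1 (hRmem _ hB).2.1)
      · rcases hB with rfl | rfl | hB
        · exact Finset.disjoint_singleton_right.2 huS'
        · exact absurd rfl hAB
        · exact hSdisj _ hB
      · rcases hB with rfl | rfl | hB
        · exact Finset.disjoint_singleton_right.2
            (hu_only _ (hRmem _ hA).1 (hRmem _ hA).2.1)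
        · exact (hSdisj _ hA).symm
        · exact hdisj _ (hRmem _ hA).1 _ (hRmem _ hB).1 hAB
    exact key P Q hP hQ hne
  have hbot : (⊥ : Finset V) ∉ T := by
    simp only [hTdef, mem_insert]
    push_neg
    refine ⟨?_, ?_, ?_⟩
    · intro h; exact Finset.singleton_ne_empty u h.symm
    · intro h; exact Finset.ne_empty_of_mem hvS' h.symm
    · intro h
      exact absurd (c.nonempty_of_mem_parts (hRmem _ h).1) (by simp)
  refine ⟨⟨T, hindep, hsup, hbot⟩, rfl, ?_, ?_⟩
  · -- proper coloring
    intro P hP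
    simp only [hTdef, mem_insert] at hP
    rcases hP with rfl | rfl | hP
    · intro a ha b hb
      simp only [mem_singleton] at ha hb
      rw [ha, hb]; exact G.loopless.irrefl u
    · intro a ha b hb hab
      have hSind := hc S hS
      have hadj_v : ∀ x ∈ S \ {u}, ¬ G.Adj x v := by
        intro x hx hxv
        have hx' := mem_sdiff.1 hx
        have : x = u ∨ G.Adj u x := (htwin x).2 (Or.inr hxv.symm)
        rcases this with rfl | h
        · simp at hx'
        · exact hSind u huS x hx'.1 h
      rcases mem_union.1 ha with ha | ha
      · rcases mem_union.1 hb with hb | hb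
        · exact hSind a (mem_sdiff.1 ha).1 b (mem_sdiff.1 hb).1 hab
        · rw [mem_singleton.1 hb] at hab; exact hadj_v a ha hab
      · rw [mem_singleton.1 ha] at hab
        rcases mem_union.1 hb with hb | hb
        · exact hadj_v b hb hab.symm
        · rw [mem_singleton.1 hb] at hab; exact G.loopless.irrefl v hab
    · exact hc P (hRmem _ hP).1
  · -- weight
    have hvR : ({v} : Finset V) ∈ c.parts.erase S := mem_erase.2 ⟨Ne.symm hSv, hvsing⟩
    have lhs_eq : colWeight w ⟨T, hindep, hsup, hbot⟩
        = w u + (((S \ {u}).sup w ⊔ w v) + ∑ P ∈ R, P.sup w) := by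
      simp only [colWeight]
      rw [Finset.sum_insert huT, Finset.sum_insert hS'R]
      simp [hS'def, Finset.sup_union]; exact max_comm _ _
    have rhs_eq : colWeight w c = S.sup w + (w v + ∑ P ∈ R, P.sup w) := by
      simp only [colWeight]
      rw [← Finset.add_sum_erase _ _ hS, ← Finset.add_sum_erase _ _ hvR]
      simp [hRdef]
    rw [lhs_eq, rhs_eq, ← add_assoc, ← add_assoc]
    apply Nat.add_le_add_right
    have h1 : w u ≤ S.sup w ⊓ w v := le_inf (Finset.le_sup huS) hwuv
    have h2 : (S \ {u}).sup w ⊔ w v ≤ S.sup w ⊔ w v :=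
      sup_le_sup_right (Finset.sup_mono sdiff_subset) _
    calc w u + ((S \ {u}).sup w ⊔ w v) ≤ (S.sup w ⊓ w v) + (S.sup w ⊔ w v) :=
          add_le_add h1 h2
      _ = S.sup w + w v := min_add_max _ _
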